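/- Let N = 7 and w = CN1 = (-1, -1, 1), and let σ be the permutation of {1,...,7} with permutation ID P(2613754), i.e., σ(1)=2, σ(2)=6, σ(3)=1, σ(4)=3, σ(5)=7, σ(6)=5, σ(7)=4 (identified with a permutation of ZMod 7 via i ↦ i-1). Then the PBNN map f_{σ,w} has a globally stable binary periodic orbit of period 20. -/

import Mathlib

/-- Sign function: `sg u = 1` if `u ≥ 0`, else `-1`. -/
def sg (u : ℤ) : ℤ := if 0 ≤ u then 1 else -1

/-- Hidden-layer map of the PBNN with weights `w = (w_a, w_b, w_c)`:
`h_w(x)_i = sg (w_a * x_{i-1} + w_b * x_i + w_c * x_{i+1})`. -/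
def hmap (N : ℕ) (w : ℤ × ℤ × ℤ) (x : ZMod N → ℤ) : ZMod N → ℤ :=
  fun i => sg (w.1 * x (i - 1) + w.2.1 * x i + w.2.2 * x (i + 1))

/-- PBNN map `f_{σ,w}(x)_i = h_w(x)_{σ(i)}`. -/
def pbnn (N : ℕ) (w : ℤ × ℤ × ℤ) (σ : Equiv.Perm (ZMod N)) (x : ZMod N → ℤ) :
    ZMod N → ℤ :=
  fun i => hmap N w x (σ i)

/-- `x` is a binary state vector, i.e. all entries lie in `B = {-1, 1}`. -/
def isB {N : ℕ} (x : ZMod N → ℤ) : Prop := ∀ i, x i = -1 ∨ x i = 1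

/-- `z` has minimal period `p` under `f`. -/
def minPeriod {α : Type} (f : α → α) (z : α) (p : ℕ) : Prop :=
  0 < p ∧ f^[p] z = z ∧ ∀ q : ℕ, 0 < q → f^[q] z = z → p ≤ q

/-- The all-`(-1)` endpoint `x_-`. -/
def xminus (N : ℕ) : ZMod N → ℤ := fun _ => -1

/-- The all-`(+1)` endpoint `x_+`. -/
def xplus (N : ℕ) : ZMod N → ℤ := fun _ => 1

/-- `f_{σ,w}` has a globally stable binary periodic orbit (GBPO) of period `p`:
there is a binary point `z` (other than the two endpoints) of minimal period `p`
such that every binary point other than the two endpoints eventually lands on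
the orbit `{z, f z, ..., f^{p-1} z}`. -/
def hasGBPO (N : ℕ) (w : ℤ × ℤ × ℤ) (σ : Equiv.Perm (ZMod N)) (p : ℕ) : Prop :=
  ∃ z : ZMod N → ℤ, isB z ∧ z ≠ xminus N ∧ z ≠ xplus N ∧
    minPeriod (pbnn N w σ) z p ∧
    ∀ x : ZMod N → ℤ, isB x → x ≠ xminus N → x ≠ xplus N →
      ∃ k : ℕ, ∃ j < p, (pbnn N w σ)^[k] x = (pbnn N w σ)^[j] z

/-- The cyclic shift `c : i ↦ i + 1` on `ZMod N`. -/
def cShift (N : ℕ) : Equiv.Perm (ZMod N) := Equiv.addRight 1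

/-- Equivalence of permutation IDs under the conjugation action of the cyclic
group generated by `c`: `σ ~ τ` iff `τ = c^k ∘ σ ∘ c^{-k}` for some `k : ℤ`. -/
def shiftSetoid (N : ℕ) : Setoid (Equiv.Perm (ZMod N)) where
  r σ τ := ∃ k : ℤ, cShift N ^ k * σ * (cShift N ^ k)⁻¹ = τ
  iseqv := by
    refine ⟨fun σ => ⟨0, by simp⟩, ?_, ?_⟩
    · rintro σ τ ⟨k, rfl⟩; exact ⟨-k, by group⟩
    · rintro σ τ ρ ⟨k, rfl⟩ ⟨l, rfl⟩; exact ⟨l + k, by group⟩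

def perm2613754Fun : ZMod 7 → ZMod 7 := fun i =>
  if i = 0 then 1 else if i = 1 then 5 else if i = 2 then 0 else if i = 3 then 2 else if i = 4 then 6 else if i = 5 then 4 else 3

noncomputable def perm2613754 : Equiv.Perm (ZMod 7) :=
  Equiv.ofBijective perm2613754Fun (by decide)


/- ==================== auxiliary machinery ==================== -/

open Fin.NatCast

def toI (b : Bool) : ℤ := if b then 1 else -1

def emb (v : ZMod 7 → Bool) : ZMod 7 → ℤ := fun i => toI (v i)

def stepB (v : ZMod 7 → Bool) : ZMod 7 → Bool := fun i =>
  decide (0 ≤ (-1 : ℤ) * toI (v (perm2613754Fun i - 1)) + (-1) * toI (v (perm2613754Fun i)) + 1 * toI (v (perm2613754Fun i + 1)))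

def orb : Fin 20 → ZMod 7 → Bool :=
![![true, true, true, false, false, false, false],
  ![false, true, true, false, true, true, false],
  ![true, false, true, false, false, true, true],
  ![true, true, false, false, false, true, false],
  ![false, false, true, false, true, true, true],
  ![true, false, false, false, false, true, true],
  ![false, true, false, true, false, true, true],
  ![false, true, true, true, false, true, false],
  ![true, false, true, false, false, true, false],
  ![true, false, false, false, true, true, false],
  ![false, false, false, true, true, true, true],
  ![true, false, false, true, false, false, true],
  ![false, true, false, true, true, false, false],
  ![false, false, true, true, true, false, true],
  ![true, true, false, true, false, false, false],
  ![false, true, true, true, true, false, false],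
  ![true, false, true, false, true, false, false],
  ![true, false, false, false, true, false, true],
  ![false, true, false, true, true, false, true],
  ![false, true, true, true, false, false, true]]

def rlist : List ℕ := [0, 3, 2, 2, 2, 2, 2, 0, 9, 1, 1, 0, 9, 2, 6, 8, 3, 3, 5, 5, 7, 0, 7, 5, 3, 3, 0, 1, 5, 4, 0, 8, 6, 1, 2, 0, 1, 0, 1, 2, 5, 4, 6, 4, 5, 4, 0, 2, 6, 0, 2, 1, 1, 7, 0, 1, 3, 3, 2, 1, 3, 4, 3, 8, 8, 3, 4, 3, 1, 2, 3, 3, 1, 0, 7, 1, 1, 2, 0, 6, 2, 0, 4, 5, 4, 6, 4, 5, 2, 1, 0, 1, 0, 2, 1, 6, 8, 0, 4, 5, 1, 0, 3, 3, 5, 7, 0, 7, 5, 5, 3, 3, 8, 6, 2, 9, 0, 1, 1, 9, 0, 2, 2, 2, 2, 2, 3, 0]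

def encode (v : ZMod 7 → Bool) : ℕ :=
  (Finset.univ : Finset (ZMod 7)).sum (fun i => if v i then 2 ^ i.val else 0)

def rank (v : ZMod 7 → Bool) : ℕ := rlist.getD (encode v) 0

set_option maxRecDepth 20000 in
lemma pbnn_emb : ∀ v : ZMod 7 → Bool,
    pbnn 7 (-1, -1, 1) perm2613754 (emb v) = emb (stepB v) := by decide

set_option maxRecDepth 20000 in
lemma ostep : ∀ j : Fin 20, stepB (orb j) = orb (j + 1) := by decide

set_option maxRecDepth 20000 in
lemma oinj0 : ∀ j : Fin 20, orb j = orb 0 → j = 0 := by decide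

set_option maxRecDepth 20000 in
lemma tstep : ∀ v : ZMod 7 → Bool, v ≠ (fun _ => false) → v ≠ (fun _ => true) →
    (∃ j : Fin 20, v = orb j) ∨
    (stepB v ≠ (fun _ => false) ∧ stepB v ≠ (fun _ => true) ∧ rank (stepB v) < rank v) := by
  decide

lemma emb_inj : Function.Injective emb := by
  intro u v h
  funext i
  have := congrFun h i
  unfold emb toI at this
  cases hu : u i <;> cases hv : v i <;> simp [hu, hv] at this <;> rfl

lemma iter_emb (k : ℕ) (v : ZMod 7 → Bool) :
    (pbnn 7 (-1, -1, 1) perm2613754)^[k] (emb v) = emb (stepB^[k] v) := by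
  induction k generalizing v with
  | zero => rfl
  | succ n ih =>
      rw [Function.iterate_succ_apply, Function.iterate_succ_apply, pbnn_emb]
      exact ih (stepB v)

lemma iter_orb (k : ℕ) (j : Fin 20) : stepB^[k] (orb j) = orb (j + (k : Fin 20)) := by
  induction k generalizing j with
  | zero => simp
  | succ n ih =>
      rw [Function.iterate_succ_apply, ostep, ih (j + 1)]
      have : ((n + 1 : ℕ) : Fin 20) = (n : Fin 20) + 1 := by push_cast; ring
      rw [this]
      rw [add_assoc, add_comm (1 : Fin 20)]

lemma reach : ∀ n : ℕ, ∀ v : ZMod 7 → Bool, v ≠ (fun _ => false) → v ≠ (fun _ => true) →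
    rank v ≤ n → ∃ k : ℕ, ∃ j : Fin 20, stepB^[k] v = orb j := by
  intro n
  induction n with
  | zero =>
      intro v h1 h2 hr
      rcases tstep v h1 h2 with ⟨j, hj⟩ | ⟨_, _, hlt⟩
      · exact ⟨0, j, hj⟩
      · omega
  | succ n ih =>
      intro v h1 h2 hr
      rcases tstep v h1 h2 with ⟨j, hj⟩ | ⟨hf, ht, hlt⟩
      · exact ⟨0, j, hj⟩
      · obtain ⟨k, j, hk⟩ := ih (stepB v) hf ht (by omega)
        exact ⟨k + 1, j, by rw [Function.iterate_succ_apply]; exact hk⟩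

/-- For `N = 7`, CN1 = (-1,-1,1) and permutation ID `P(2613754)`, the PBNN map
has a globally stable binary periodic orbit of period `20`. -/
theorem stmt8 : hasGBPO 7 (-1, -1, 1) perm2613754 20 := by
  refine ⟨emb (orb 0), ?_, by decide, by decide, ⟨by norm_num, ?_, ?_⟩, ?_⟩
  · intro i
    unfold emb toI
    cases orb 0 i <;> simp
  · rw [iter_emb]
    rw [iter_orb]
    norm_num
    exact congrArg emb (by decide)
  · intro q hq hfix
    by_contra hlt
    push_neg at hlt
    rw [iter_emb, iter_orb] at hfix
    have h0 : orb (0 + (q : Fin 20)) = orb 0 := emb_inj hfix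
    have := oinj0 _ h0
    rw [zero_add] at this
    have hv : ((q : Fin 20) : ℕ) = q % 20 := Fin.val_natCast q 20
    rw [this] at hv
    simp at hv
    omega
  · intro x hB hm hp
    set v : ZMod 7 → Bool := fun i => decide (x i = 1) with hv
    have hx : emb v = x := by
      funext i
      rcases hB i with h | h <;> simp [emb, toI, hv, h]
    have h1 : v ≠ (fun _ => false) := by
      intro h
      apply hm
      rw [← hx, h]
      rfl
    have h2 : v ≠ (fun _ => true) := by
      intro h
      apply hp
      rw [← hx, h]
      rfl
    obtain ⟨k, j, hk⟩ := reach (rank v) v h1 h2 le_rfl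
    refine ⟨k, j.val, j.isLt, ?_⟩
    rw [← hx, iter_emb, hk, iter_emb, iter_orb, zero_add, Fin.cast_val_eq_self]
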